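/- Fix s ∈ ℕ. Suppose ψ ∈ ℝ satisfies Ψ^s(t) ≤ ψ for all times t ≥ 0, and suppose the local skew at time 0 satisfies 𝓛(0) ≤ 2(s+1)κ. Then for all natural numbers s′ ≥ s and all times t ≥ 0, Ψ^{s′}(t) ≤ (ρ/μ)^{s′−s}·ψ. -/

import Mathlib

open Finset

variable {V : Type*}

/-- Node `v` satisfies the *fast condition* at time `t`. -/
def fastCond (G : SimpleGraph V) (L : V → ℝ → ℝ) (κ : ℝ) (v : V) (t : ℝ) : Prop :=
  ∃ s : ℕ, (∃ x, G.Adj v x ∧ (2 * (s : ℝ) + 1) * κ ≤ L x t - L v t) ∧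
    ∀ y, G.Adj v y → L v t - L y t ≤ (2 * (s : ℝ) + 1) * κ

/-- Node `v` satisfies the *slow condition* at time `t`. -/
def slowCond (G : SimpleGraph V) (L : V → ℝ → ℝ) (κ : ℝ) (v : V) (t : ℝ) : Prop :=
  ∃ s : ℕ, (∃ x, G.Adj v x ∧ 2 * (s : ℝ) * κ ≤ L v t - L x t) ∧
    ∀ y, G.Adj v y → L y t - L v t ≤ 2 * (s : ℝ) * κ

/-- `Ψ_v^s(t) = max_{w ∈ V} (L_w(t) - L_v(t) - 2sκ·d(v,w))`. -/
noncomputable def Psi [Fintype V] [Nonempty V] (G : SimpleGraph V) (L : V → ℝ → ℝ)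
    (κ : ℝ) (s : ℕ) (v : V) (t : ℝ) : ℝ :=
  univ.sup' univ_nonempty fun w => L w t - L v t - 2 * (s : ℝ) * κ * (G.dist v w)

/-- `Ψ^s(t) = max_{v ∈ V} Ψ_v^s(t)`. -/
noncomputable def PsiMax [Fintype V] [Nonempty V] (G : SimpleGraph V) (L : V → ℝ → ℝ)
    (κ : ℝ) (s : ℕ) (t : ℝ) : ℝ :=
  univ.sup' univ_nonempty fun v => Psi G L κ s v t

/-- `Ξ_v^s(t) = max_{w ∈ V} (L_v(t) - L_w(t) - (2s+1)κ·d(v,w))`. -/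
noncomputable def Xi [Fintype V] [Nonempty V] (G : SimpleGraph V) (L : V → ℝ → ℝ)
    (κ : ℝ) (s : ℕ) (v : V) (t : ℝ) : ℝ :=
  univ.sup' univ_nonempty fun w => L v t - L w t - (2 * (s : ℝ) + 1) * κ * (G.dist v w)

/-- The global skew `𝒢(t) = max_{v,w ∈ V} |L_v(t) - L_w(t)|`. -/
noncomputable def GSkew [Fintype V] [Nonempty V] (L : V → ℝ → ℝ) (t : ℝ) : ℝ :=
  univ.sup' univ_nonempty fun p : V × V => |L p.1 t - L p.2 t|


section GCSAux

open Filter Topology Set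

/-- Barrier/fencing lemma for a finite max of differentiable functions: if all
functions start at or below `lvl` and every function that is active (i.e. attains
the max) and at or above the level has nonpositive derivative, then all functions
stay at or below `lvl`. -/
lemma finset_max_barrier {ι : Type*} [Fintype ι] [Nonempty ι] (g : ι → ℝ → ℝ)
    (hg : ∀ i, Differentiable ℝ (g i)) (lvl t : ℝ) (ht : 0 ≤ t)
    (h0 : ∀ i, g i 0 ≤ lvl)
    (hder : ∀ x, 0 ≤ x → ∀ i, (∀ j, g j x ≤ g i x) → lvl ≤ g i x → deriv (g i) x ≤ 0) :
    ∀ i, g i t ≤ lvl := by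
  set f : ℝ → ℝ := fun x => univ.sup' univ_nonempty fun i => g i x with hf
  have hfle : ∀ i x, g i x ≤ f x := fun i x => Finset.le_sup' (fun j => g j x) (mem_univ i)
  have hfc : Continuous f := by
    rw [continuous_iff_continuousAt]
    intro x
    exact ContinuousAt.finset_sup'_apply univ_nonempty
      (fun i _ => ((hg i).continuous).continuousAt)
  -- the set of active indices
  have hact : ∀ x : ℝ, ({i ∈ (univ : Finset ι) | g i x = f x}).Nonempty := by
    intro x
    obtain ⟨i, -, hi⟩ := Finset.exists_mem_eq_sup' (univ_nonempty) (fun i => g i x)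
    exact ⟨i, by simp [hi.symm]; rfl⟩
  set f' : ℝ → ℝ := fun x => ({i ∈ (univ : Finset ι) | g i x = f x}).sup' (hact x)
      fun i => deriv (g i) x with hf'def
  have hf' : ∀ x ∈ Ico (0:ℝ) t, ∀ r : ℝ, f' x < r → ∃ᶠ z in 𝓝[>] x, slope f x z < r := by
    intro x hx r hr
    have hev : ∀ᶠ z in 𝓝[>] x, ∀ i : ι, g i z - f x < r * (z - x) := by
      rw [Filter.eventually_all]
      intro i
      by_cases hi : g i x = f x
      · -- active index
        have hdle : deriv (g i) x ≤ f' x := by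
          refine Finset.le_sup' (fun j => deriv (g j) x) ?_
          simp [hi]
        have hslope : Tendsto (slope (g i) x) (𝓝[>] x) (𝓝 (deriv (g i) x)) := by
          refine (hasDerivAt_iff_tendsto_slope.mp ((hg i) x).hasDerivAt).mono_left
            (nhdsWithin_mono x ?_)
          intro z hz
          exact ne_of_gt hz
        have h1 : ∀ᶠ z in 𝓝[>] x, slope (g i) x z < r :=
          hslope.eventually_lt_const (lt_of_le_of_lt hdle hr)
        have h2 : ∀ᶠ z in 𝓝[>] x, x < z := eventually_mem_nhdsWithin
        filter_upwards [h1, h2] with z h1 h2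
        rw [slope_def_field, div_lt_iff₀ (by linarith)] at h1
        linarith [h1, hi.ge, hi.le]
      · -- inactive index
        have hlt : g i x < f x := lt_of_le_of_ne (hfle i x) hi
        have hcont : Continuous fun z => g i z - f x - r * (z - x) :=
          (((hg i).continuous.sub continuous_const).sub
            (continuous_const.mul (continuous_id.sub continuous_const)))
        have : Tendsto (fun z => g i z - f x - r * (z - x)) (𝓝 x)
            (𝓝 (g i x - f x - r * (x - x))) := hcont.tendsto x
        have hev0 : ∀ᶠ z in 𝓝 x, g i z - f x - r * (z - x) < 0 :=
          this.eventually_lt_const (by simp; linarith)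
        filter_upwards [nhdsWithin_le_nhds hev0] with z hz
        linarith
    refine (hev.and eventually_mem_nhdsWithin).frequently.mono ?_
    rintro z ⟨hz1, hz2 : x < z⟩
    rw [slope_def_field, div_lt_iff₀ (by linarith)]
    have : f z < f x + r * (z - x) := by
      rw [hf]
      refine (Finset.sup'_lt_iff univ_nonempty).2 fun i _ => ?_
      linarith [hz1 i]
    linarith
  have key : ∀ ε : ℝ, 0 < ε → f t ≤ lvl + ε * t := by
    intro ε hε
    have := image_le_of_liminf_slope_right_lt_deriv_boundary (B := fun z => lvl + ε * z)
      (B' := fun _ => ε) (hfc.continuousOn) hf'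
      (by
        simp only [mul_zero, add_zero]
        exact Finset.sup'_le univ_nonempty _ fun i _ => h0 i)
      (fun z => by
        simpa using (((hasDerivAt_id z).const_mul ε).const_add lvl))
      (fun x hx hfx => ?_) (right_mem_Icc.2 ht)
    · exact this
    · -- at contact points, f' x < ε
      refine lt_of_le_of_lt (Finset.sup'_le (hact x) _ fun i hi => ?_) hε
      simp only [Finset.mem_filter] at hi
      have hiact : ∀ j, g j x ≤ g i x := fun j => hi.2 ▸ hfle j x
      have hlvl : lvl ≤ g i x := by
        rw [hi.2, hfx]
        nlinarith [mul_nonneg hε.le hx.1]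
      exact hder x hx.1 i hiact hlvl
  have hft : f t ≤ lvl := by
    by_contra hcon
    push_neg at hcon
    rcases eq_or_lt_of_le ht with h | h
    · subst h
      have : f 0 ≤ lvl := Finset.sup'_le (univ_nonempty (α := ι)) (fun i => g i (0:ℝ))
        fun i _ => h0 i
      exact absurd this (not_le.2 hcon)
    · have hkey := key ((f t - lvl) / (2 * t)) (div_pos (by linarith) (by linarith))
      have heq : (f t - lvl) / (2 * t) * t = (f t - lvl) / 2 := by
        field_simp
      linarith
  exact fun i => (hfle i t).trans hft

/-- One step of the geometric-decay argument. -/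
lemma gcs_step [Fintype V] [Nonempty V] (G : SimpleGraph V) (hconn : G.Connected)
    (L : V → ℝ → ℝ) (κ ρ μ : ℝ) (hκ : 0 < κ) (hρ : 0 < ρ) (hρμ : ρ < μ)
    (hdiff : ∀ v, Differentiable ℝ (L v))
    (hrate : ∀ v u, 0 ≤ u → 1 ≤ deriv (L v) u ∧ deriv (L v) u ≤ (1 + μ) * (1 + ρ))
    (hfastI : ∀ v u, 0 ≤ u → fastCond G L κ v u → 1 + μ ≤ deriv (L v) u)
    (hslowI : ∀ v u, 0 ≤ u → slowCond G L κ v u → deriv (L v) u ≤ 1 + ρ)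
    (σ : ℕ) (c : ℝ) (hc : 0 ≤ c)
    (hΨ : ∀ τ, 0 ≤ τ → PsiMax G L κ σ τ ≤ c)
    (hinit0 : ∀ v w : V, L w 0 - L v 0 ≤ 2 * ((σ : ℝ) + 1) * κ * (G.dist v w))
    (t : ℝ) (ht : 0 ≤ t) : PsiMax G L κ (σ + 1) t ≤ ρ / μ * c := by
  have hμ : 0 < μ := hρ.trans hρμ
  obtain ⟨β, hβ⟩ : ∃ x : ℝ, x = ρ / μ := ⟨_, rfl⟩
  obtain ⟨a, ha⟩ : ∃ x : ℝ, x = 2 * ((σ : ℝ) + 1) * κ := ⟨_, rfl⟩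
  obtain ⟨b, hb⟩ : ∃ x : ℝ, x = (2 * (σ : ℝ) + 1) * κ := ⟨_, rfl⟩
  have hβ0 : 0 < β := by rw [hβ]; exact div_pos hρ hμ
  have hβ1 : β < 1 := by rw [hβ]; exact (div_lt_one hμ).2 hρμ
  have hβμ : β * μ = ρ := by rw [hβ]; exact div_mul_cancel₀ ρ hμ.ne'
  have ha0 : 0 < a := by rw [ha]; positivity
  have hb0 : 0 < b := by rw [hb]; positivity
  have hab : a = b + κ := by rw [ha, hb]; ring
  obtain ⟨g, hg⟩ : ∃ g : V × V × V → ℝ → ℝ, g = fun p x =>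
      (L p.2.1 x - L p.1 x - a * (G.dist p.1 p.2.1)) +
        β * (L p.1 x - L p.2.2 x - b * (G.dist p.1 p.2.2)) := ⟨_, rfl⟩
  have hgval : ∀ (v w u : V) (x : ℝ), g (v, w, u) x =
      (L w x - L v x - a * (G.dist v w)) + β * (L v x - L u x - b * (G.dist v u)) := by
    intro v w u x; rw [hg]
  -- Ξ-type bound from the hypothesis on Ψ^σ
  have hXi : ∀ x : ℝ, 0 ≤ x → ∀ v u : V,
      L v x - L u x - b * (G.dist v u) ≤ c - κ * (G.dist v u) := by
    intro x hx v u
    have h1 : L v x - L u x - 2 * (σ : ℝ) * κ * (G.dist u v) ≤ Psi G L κ σ u x :=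
      Finset.le_sup' (fun w => L w x - L u x - 2 * (σ : ℝ) * κ * (G.dist u w)) (mem_univ v)
    have h2 : Psi G L κ σ u x ≤ PsiMax G L κ σ x :=
      Finset.le_sup' (fun v => Psi G L κ σ v x) (mem_univ u)
    have h3 := hΨ x hx
    have hcomm : G.dist u v = G.dist v u := SimpleGraph.dist_comm
    rw [hcomm] at h1
    have hbd : b * ((G.dist v u : ℕ) : ℝ) =
        2 * (σ : ℝ) * κ * (G.dist v u) + κ * (G.dist v u) := by rw [hb]; ring
    linarith
  -- first step on a shortest path
  have hstep : ∀ v w : V, v ≠ w → ∃ x, G.Adj v x ∧ G.dist x w + 1 ≤ G.dist v w := by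
    intro v w hne
    obtain ⟨p, hp⟩ := hconn.exists_walk_length_eq_dist v w
    cases p with
    | nil => exact absurd rfl hne
    | cons hadj q =>
      refine ⟨_, hadj, ?_⟩
      have h1 := SimpleGraph.dist_le q
      rw [SimpleGraph.Walk.length_cons] at hp
      omega
  have hgdiff : ∀ p, Differentiable ℝ (g p) := by
    rintro ⟨v, w, u⟩
    rw [hg]
    exact (((hdiff w).sub (hdiff v)).sub_const _).add
      ((((hdiff v).sub (hdiff u)).sub_const _).const_mul β)
  -- initial bound
  have h0 : ∀ p : V × V × V, g p 0 ≤ β * c := by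
    rintro ⟨v, w, u⟩
    rw [hgval]
    have h1 : L w 0 - L v 0 - a * (G.dist v w) ≤ 0 := by
      have := hinit0 v w; rw [← ha] at this; linarith
    have h2 : L v 0 - L u 0 - b * (G.dist v u) ≤ c := by
      have := hXi 0 le_rfl v u
      have hd : (0:ℝ) ≤ κ * (G.dist v u) := by positivity
      linarith
    have h3 : β * (L v 0 - L u 0 - b * (G.dist v u)) ≤ β * c :=
      mul_le_mul_of_nonneg_left h2 hβ0.le
    linarith
  -- derivative bound for active maximal triples at or above the level
  have hder : ∀ x, 0 ≤ x → ∀ p : V × V × V, (∀ q, g q x ≤ g p x) → β * c ≤ g p x →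
      deriv (g p) x ≤ 0 := by
    intro x hx0 p hmax hlvl
    obtain ⟨v, w, u⟩ := p
    have hD : HasDerivAt (g (v, w, u))
        ((deriv (L w) x - deriv (L v) x) + β * (deriv (L v) x - deriv (L u) x)) x := by
      rw [hg]
      have h1 : HasDerivAt (fun y => L w y - L v y - a * ((G.dist v w : ℕ) : ℝ))
          (deriv (L w) x - deriv (L v) x) x :=
        (((hdiff w x).hasDerivAt).sub ((hdiff v x).hasDerivAt)).sub_const _
      have h2 : HasDerivAt (fun y => β * (L v y - L u y - b * ((G.dist v u : ℕ) : ℝ)))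
          (β * (deriv (L v) x - deriv (L u) x)) x :=
        ((((hdiff v x).hasDerivAt).sub ((hdiff u x).hasDerivAt)).sub_const _).const_mul β
      exact h1.add h2
    rw [hD.deriv]
    have M1 : ∀ w' : V, L w' x - a * (G.dist v w') ≤ L w x - a * (G.dist v w) := by
      intro w'
      have h := hmax (v, w', u)
      rw [hgval, hgval] at h
      linarith
    have M2 : ∀ u' : V, L v x - L u' x - b * (G.dist v u') ≤
        L v x - L u x - b * (G.dist v u) := by
      intro u'
      have h := hmax (v, w, u')
      rw [hgval, hgval] at h
      have h2 : β * (L v x - L u' x - b * (G.dist v u')) ≤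
          β * (L v x - L u x - b * (G.dist v u)) := by linarith
      exact (mul_le_mul_iff_right₀ hβ0).mp h2
    by_cases hwv : w = v
    · by_cases huv : u = v
      · rw [hwv, huv]
        have hz : (deriv (L v) x - deriv (L v) x) + β * (deriv (L v) x - deriv (L v) x) = 0 := by
          ring
        linarith
      · exfalso
        rw [hgval, hwv] at hlvl
        have hds : ((G.dist v v : ℕ) : ℝ) = 0 := by
          rw [SimpleGraph.dist_self]; norm_num
        rw [hds] at hlvl
        have hXv : c ≤ L v x - L u x - b * (G.dist v u) :=
          le_of_mul_le_mul_left (by linarith) hβ0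
        have hdp : 1 ≤ G.dist v u := hconn.pos_dist_of_ne (fun h => huv h.symm)
        have hd1 : (1:ℝ) ≤ (G.dist v u : ℝ) := by exact_mod_cast hdp
        have h2 := hXi x hx0 v u
        have hκd : κ * 1 ≤ κ * (G.dist v u : ℝ) := mul_le_mul_of_nonneg_left hd1 hκ.le
        linarith
    · -- w ≠ v : w is slow
      have hwslow : deriv (L w) x ≤ 1 + ρ := by
        apply hslowI w x hx0
        refine ⟨σ + 1, ⟨?_, ?_⟩⟩
        · obtain ⟨x₀, hadj, hd⟩ := hstep w v hwv
          refine ⟨x₀, hadj, ?_⟩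
          have hM := M1 x₀
          have hcast : ((G.dist v x₀ : ℕ) : ℝ) + 1 ≤ ((G.dist v w : ℕ) : ℝ) := by
            have e1 : G.dist v x₀ = G.dist x₀ v := SimpleGraph.dist_comm
            have e2 : G.dist v w = G.dist w v := SimpleGraph.dist_comm
            rw [e1, e2]; exact_mod_cast hd
          have key : a * 1 ≤ a * (((G.dist v w : ℕ) : ℝ) - (G.dist v x₀ : ℕ)) :=
            mul_le_mul_of_nonneg_left (by linarith) ha0.le
          have key2 : a * (((G.dist v w : ℕ) : ℝ) - (G.dist v x₀ : ℕ)) =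
              a * (G.dist v w) - a * (G.dist v x₀) := by ring
          have hgoal : 2 * (((σ + 1 : ℕ)) : ℝ) * κ = a := by rw [ha]; push_cast; ring
          rw [hgoal]
          linarith
        · intro y hy
          have hM := M1 y
          have htri : G.dist v y ≤ G.dist v w + 1 := by
            have h1 := hconn.dist_triangle (u := v) (v := w) (w := y)
            have h2 : G.dist w y = 1 := SimpleGraph.dist_eq_one_iff_adj.2 hy
            omega
          have hcast : ((G.dist v y : ℕ) : ℝ) ≤ ((G.dist v w : ℕ) : ℝ) + 1 := by
            exact_mod_cast htri
          have key : a * (((G.dist v y : ℕ) : ℝ) - (G.dist v w : ℕ)) ≤ a * 1 :=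
            mul_le_mul_of_nonneg_left (by linarith) ha0.le
          have key2 : a * (((G.dist v y : ℕ) : ℝ) - (G.dist v w : ℕ)) =
              a * (G.dist v y) - a * (G.dist v w) := by ring
          have hgoal : 2 * (((σ + 1 : ℕ)) : ℝ) * κ = a := by rw [ha]; push_cast; ring
          rw [hgoal]
          linarith
      by_cases huv : u = v
      · -- trailing case: v is fast
        rw [huv]
        have hvfast : 1 + μ ≤ deriv (L v) x := by
          apply hfastI v x hx0
          refine ⟨σ, ⟨?_, ?_⟩⟩
          · obtain ⟨x₁, hadj, hd⟩ := hstep v w (fun h => hwv h.symm)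
            refine ⟨x₁, hadj, ?_⟩
            have h := hmax (x₁, w, x₁)
            rw [hgval, hgval, huv] at h
            have hds1 : ((G.dist x₁ x₁ : ℕ) : ℝ) = 0 := by
              rw [SimpleGraph.dist_self]; norm_num
            have hds2 : ((G.dist v v : ℕ) : ℝ) = 0 := by
              rw [SimpleGraph.dist_self]; norm_num
            rw [hds1, hds2] at h
            have hcast : ((G.dist x₁ w : ℕ) : ℝ) + 1 ≤ ((G.dist v w : ℕ) : ℝ) := by
              exact_mod_cast hd
            have key : a * 1 ≤ a * (((G.dist v w : ℕ) : ℝ) - (G.dist x₁ w : ℕ)) :=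
              mul_le_mul_of_nonneg_left (by linarith) ha0.le
            have key2 : a * (((G.dist v w : ℕ) : ℝ) - (G.dist x₁ w : ℕ)) =
                a * (G.dist v w) - a * (G.dist x₁ w) := by ring
            have hgoal : (2 * (σ : ℝ) + 1) * κ = b := hb.symm
            rw [hgoal]
            linarith
          · intro y hy
            have hM := M2 y
            rw [huv] at hM
            have hds2 : ((G.dist v v : ℕ) : ℝ) = 0 := by
              rw [SimpleGraph.dist_self]; norm_num
            rw [hds2] at hM
            have hdy : ((G.dist v y : ℕ) : ℝ) = 1 := by
              rw [SimpleGraph.dist_eq_one_iff_adj.2 hy]; norm_num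
            rw [hdy] at hM
            have hgoal : (2 * (σ : ℝ) + 1) * κ = b := hb.symm
            rw [hgoal]
            linarith
        have hz : β * (deriv (L v) x - deriv (L v) x) = 0 := by ring
        linarith
      · -- u ≠ v : u is fast
        have hufast : 1 + μ ≤ deriv (L u) x := by
          apply hfastI u x hx0
          refine ⟨σ, ⟨?_, ?_⟩⟩
          · obtain ⟨x₂, hadj, hd⟩ := hstep u v huv
            refine ⟨x₂, hadj, ?_⟩
            have hM := M2 x₂
            have hcast : ((G.dist v x₂ : ℕ) : ℝ) + 1 ≤ ((G.dist v u : ℕ) : ℝ) := by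
              have e1 : G.dist v x₂ = G.dist x₂ v := SimpleGraph.dist_comm
              have e2 : G.dist v u = G.dist u v := SimpleGraph.dist_comm
              rw [e1, e2]; exact_mod_cast hd
            have key : b * 1 ≤ b * (((G.dist v u : ℕ) : ℝ) - (G.dist v x₂ : ℕ)) :=
              mul_le_mul_of_nonneg_left (by linarith) hb0.le
            have key2 : b * (((G.dist v u : ℕ) : ℝ) - (G.dist v x₂ : ℕ)) =
                b * (G.dist v u) - b * (G.dist v x₂) := by ring
            have hgoal : (2 * (σ : ℝ) + 1) * κ = b := hb.symm
            rw [hgoal]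
            linarith
          · intro y hy
            have hM := M2 y
            have htri : G.dist v y ≤ G.dist v u + 1 := by
              have h1 := hconn.dist_triangle (u := v) (v := u) (w := y)
              have h2 : G.dist u y = 1 := SimpleGraph.dist_eq_one_iff_adj.2 hy
              omega
            have hcast : ((G.dist v y : ℕ) : ℝ) ≤ ((G.dist v u : ℕ) : ℝ) + 1 := by
              exact_mod_cast htri
            have key : b * (((G.dist v y : ℕ) : ℝ) - (G.dist v u : ℕ)) ≤ b * 1 :=
              mul_le_mul_of_nonneg_left (by linarith) hb0.le
            have key2 : b * (((G.dist v y : ℕ) : ℝ) - (G.dist v u : ℕ)) =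
                b * (G.dist v y) - b * (G.dist v u) := by ring
            have hgoal : (2 * (σ : ℝ) + 1) * κ = b := hb.symm
            rw [hgoal]
            linarith
        have hv1 : 1 ≤ deriv (L v) x := (hrate v x hx0).1
        have e1 : (1 - β) * 1 ≤ (1 - β) * deriv (L v) x :=
          mul_le_mul_of_nonneg_left hv1 (by linarith)
        have e2 : β * (1 + μ) ≤ β * deriv (L u) x := mul_le_mul_of_nonneg_left hufast hβ0.le
        have e3 : β * (1 + μ) = β + ρ := by rw [mul_add, mul_one, hβμ]
        have hre : (deriv (L w) x - deriv (L v) x) + β * (deriv (L v) x - deriv (L u) x) =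
            deriv (L w) x - (1 - β) * deriv (L v) x - β * deriv (L u) x := by ring
        rw [hre]
        linarith
  have hbar := finset_max_barrier g hgdiff (β * c) t ht h0 hder
  -- conclude
  have hgoalβ : ρ / μ * c = β * c := by rw [hβ]
  rw [hgoalβ]
  refine Finset.sup'_le _ _ fun v _ => Finset.sup'_le _ _ fun w _ => ?_
  have hb1 := hbar (v, w, v)
  rw [hgval] at hb1
  have hds : ((G.dist v v : ℕ) : ℝ) = 0 := by rw [SimpleGraph.dist_self]; norm_num
  rw [hds] at hb1
  have hcoef : 2 * (((σ + 1 : ℕ)) : ℝ) * κ = a := by rw [ha]; push_cast; ring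
  rw [hcoef]
  linarith

end GCSAux

/-- geometric decay of `Ψ^{s'}` for `s' ≥ s`, under good initialization. -/
theorem stmt_14 [Fintype V] [Nonempty V] (G : SimpleGraph V) (hconn : G.Connected)
    (L : V → ℝ → ℝ) (κ ρ μ : ℝ) (hκ : 0 < κ) (hρ : 0 < ρ) (hρμ : ρ < μ)
    (hdiff : ∀ v, Differentiable ℝ (L v))
    (hrate : ∀ v u, 0 ≤ u → 1 ≤ deriv (L v) u ∧ deriv (L v) u ≤ (1 + μ) * (1 + ρ))
    (hfastI : ∀ v u, 0 ≤ u → fastCond G L κ v u → 1 + μ ≤ deriv (L v) u)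
    (hslowI : ∀ v u, 0 ≤ u → slowCond G L κ v u → deriv (L v) u ≤ 1 + ρ)
    (s : ℕ) (ψ : ℝ) (hψ : ∀ t, 0 ≤ t → PsiMax G L κ s t ≤ ψ)
    (hinit : ∀ v w, G.Adj v w → |L v 0 - L w 0| ≤ 2 * ((s : ℝ) + 1) * κ) :
    ∀ s' : ℕ, s ≤ s' → ∀ t, 0 ≤ t → PsiMax G L κ s' t ≤ (ρ / μ) ^ (s' - s) * ψ := by
  have hμ : 0 < μ := hρ.trans hρμ
  -- ψ is nonnegative
  have hψ0 : 0 ≤ ψ := by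
    obtain ⟨v⟩ := (inferInstance : Nonempty V)
    have h : L v 0 - L v 0 - 2 * (s : ℝ) * κ * (G.dist v v) ≤ Psi G L κ s v 0 :=
      Finset.le_sup' (fun w => L w 0 - L v 0 - 2 * (s : ℝ) * κ * (G.dist v w)) (mem_univ v)
    have hds : ((G.dist v v : ℕ) : ℝ) = 0 := by rw [SimpleGraph.dist_self]; norm_num
    rw [hds] at h
    have h2 : Psi G L κ s v 0 ≤ PsiMax G L κ s 0 :=
      Finset.le_sup' (fun v => Psi G L κ s v 0) (mem_univ v)
    have h3 := hψ 0 le_rfl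
    linarith
  -- telescoping the initial skew bound along walks
  have hwalk : ∀ (v w : V) (p : G.Walk v w),
      L w 0 - L v 0 ≤ 2 * ((s : ℝ) + 1) * κ * p.length := by
    intro v w p
    induction p with
    | nil => simp
    | cons hadj q ih =>
      rename_i v' x w'
      have habs := hinit v' x hadj
      rw [abs_le] at habs
      rw [SimpleGraph.Walk.length_cons]
      have hexp : 2 * ((s : ℝ) + 1) * κ * (((q.length + 1 : ℕ)) : ℝ) =
          2 * ((s : ℝ) + 1) * κ * (q.length : ℝ) + 2 * ((s : ℝ) + 1) * κ := by
        push_cast; ring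
      rw [hexp]
      linarith [ih, habs.1]
  have hinitd : ∀ σ : ℕ, s ≤ σ →
      ∀ v w : V, L w 0 - L v 0 ≤ 2 * ((σ : ℝ) + 1) * κ * (G.dist v w) := by
    intro σ hσ v w
    obtain ⟨p, hp⟩ := hconn.exists_walk_length_eq_dist v w
    have h1 := hwalk v w p
    rw [hp] at h1
    have hσR : ((s : ℝ)) ≤ (σ : ℝ) := by exact_mod_cast hσ
    have hd0 : (0:ℝ) ≤ ((G.dist v w : ℕ) : ℝ) := by positivity
    have hmono : 2 * ((s : ℝ) + 1) * κ * (G.dist v w) ≤ 2 * ((σ : ℝ) + 1) * κ * (G.dist v w) :=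
      mul_le_mul_of_nonneg_right (by nlinarith) hd0
    linarith
  intro s' hs'
  induction s', hs' using Nat.le_induction with
  | base =>
    intro t ht
    simpa using hψ t ht
  | succ σ hσ ih =>
    intro t ht
    have hc : 0 ≤ (ρ / μ) ^ (σ - s) * ψ :=
      mul_nonneg (pow_nonneg (div_pos hρ hμ).le _) hψ0
    have hstep := gcs_step G hconn L κ ρ μ hκ hρ hρμ hdiff hrate hfastI hslowI σ
      ((ρ / μ) ^ (σ - s) * ψ) hc ih (hinitd σ hσ) t ht
    have he : σ + 1 - s = (σ - s) + 1 := by omega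
    rw [he, pow_succ]
    calc PsiMax G L κ (σ + 1) t ≤ ρ / μ * ((ρ / μ) ^ (σ - s) * ψ) := hstep
      _ = (ρ / μ) ^ (σ - s) * (ρ / μ) * ψ := by ring
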